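/- Let a and b be orientation-preserving self-homeomorphisms of S¹ = ℝ/ℤ satisfying the contracting ping-pong hypotheses with pairwise disjoint connected closed sets P(a), P(b), P(a⁻¹), P(b⁻¹). Let g ∈ ⟨a, b⟩ be represented by a cyclically reduced word of length at least 2 in the letters {a, b, a⁻¹, b⁻¹}, with rightmost letter c and leftmost letter d (so d ≠ c⁻¹). Then g has a fixed point in P(d) which is an attracting fixed point of g in S¹ and is the unique attracting fixed point of g, and g has a fixed point in P(c⁻¹) which is a repelling fixed point of g. -/

import Mathlib

noncomputable section

/-- The circle `S¹ = ℝ/ℤ`, with its arclength (quotient) metric. -/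
abbrev Circle1 := AddCircle (1 : ℝ)

/-- The group of self-homeomorphisms of a space, with `(f * g) x = f (g x)`. -/
instance {X : Type*} [TopologicalSpace X] : Group (X ≃ₜ X) where
  mul f g := g.trans f
  one := Homeomorph.refl _
  inv := Homeomorph.symm
  mul_assoc _ _ _ := Homeomorph.ext fun _ => rfl
  one_mul _ := Homeomorph.ext fun _ => rfl
  mul_one _ := Homeomorph.ext fun _ => rfl
  inv_mul_cancel f := Homeomorph.ext f.symm_apply_apply

/-- `x` is an attracting fixed point of `f`: it is fixed, and there is an open
neighborhood `U` of `x` such that the iterates of every point of `U` converge to `x`. -/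
def IsAttractingFixedPt {X : Type*} [TopologicalSpace X] (f : X → X) (x : X) : Prop :=
  f x = x ∧ ∃ U : Set X, IsOpen U ∧ x ∈ U ∧
    ∀ y ∈ U, Filter.Tendsto (fun k => f^[k] y) Filter.atTop (nhds x)

/-- `f` is contracting on the set `S`: it strictly decreases distances between
distinct points of `S`. -/
def ContractingOn {X : Type*} [MetricSpace X] (f : X → X) (S : Set X) : Prop :=
  ∀ x ∈ S, ∀ y ∈ S, x ≠ y → dist (f x) (f y) < dist x y

/-- A self-homeomorphism of `ℝ/ℤ` is orientation-preserving if it lifts to a strictly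
increasing homeomorphism of `ℝ`. -/
def OrientationPreserving (f : Circle1 ≃ₜ Circle1) : Prop :=
  ∃ F : ℝ ≃ₜ ℝ, StrictMono F ∧ ∀ t : ℝ, f ((t : ℝ) : Circle1) = ((F t : ℝ) : Circle1)

/-- The hypotheses of the contracting Ping-Pong Lemma for orientation-preserving
self-homeomorphisms `a, b` of `S¹` with ping-pong sets `Pa, Pb, Pa', Pb'` (for
`a`, `b`, `a⁻¹`, `b⁻¹` respectively). -/
structure ContractingPingPong (a b : Circle1 ≃ₜ Circle1)
    (Pa Pb Pa' Pb' : Set Circle1) : Prop where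
  orient_a : OrientationPreserving a
  orient_b : OrientationPreserving b
  unique_attract_a : ∃! x, IsAttractingFixedPt (⇑a) x
  unique_attract_b : ∃! x, IsAttractingFixedPt (⇑b) x
  unique_attract_a' : ∃! x, IsAttractingFixedPt (⇑a⁻¹) x
  unique_attract_b' : ∃! x, IsAttractingFixedPt (⇑b⁻¹) x
  closed_a : IsClosed Pa
  closed_b : IsClosed Pb
  closed_a' : IsClosed Pa'
  closed_b' : IsClosed Pb'
  connected_a : IsConnected Pa
  connected_b : IsConnected Pb
  connected_a' : IsConnected Pa'
  connected_b' : IsConnected Pb'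
  attract_mem_a : ∀ x, IsAttractingFixedPt (⇑a) x → x ∈ Pa
  attract_mem_b : ∀ x, IsAttractingFixedPt (⇑b) x → x ∈ Pb
  attract_mem_a' : ∀ x, IsAttractingFixedPt (⇑a⁻¹) x → x ∈ Pa'
  attract_mem_b' : ∀ x, IsAttractingFixedPt (⇑b⁻¹) x → x ∈ Pb'
  disj_ab : Disjoint Pa Pb
  disj_aa' : Disjoint Pa Pa'
  disj_ab' : Disjoint Pa Pb'
  disj_ba' : Disjoint Pb Pa'
  disj_bb' : Disjoint Pb Pb'
  disj_a'b' : Disjoint Pa' Pb'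
  maps_a : ⇑a '' Pa'ᶜ ⊆ Pa
  maps_b : ⇑b '' Pb'ᶜ ⊆ Pb
  maps_a' : ⇑a⁻¹ '' Paᶜ ⊆ Pa'
  maps_b' : ⇑b⁻¹ '' Pbᶜ ⊆ Pb'
  contracting_a : ContractingOn (⇑a) Pa'ᶜ
  contracting_b : ContractingOn (⇑b) Pb'ᶜ
  contracting_a' : ContractingOn (⇑a⁻¹) Paᶜ
  contracting_b' : ContractingOn (⇑b⁻¹) Pbᶜ

/-- Formal letters for words in `a, b, a⁻¹, b⁻¹`: the letter `(i, s)` stands for `a` if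
`i = 0, s = true`, for `b` if `i = 1, s = true`, and for the corresponding inverse when
`s = false`. -/
abbrev PPLetter := Fin 2 × Bool

/-- The formal inverse of a letter. -/
def PPLetter.formalInv (l : PPLetter) : PPLetter := (l.1, !l.2)

/-- The value of a letter in the group, given `a` and `b`. -/
def letterVal (a b : Circle1 ≃ₜ Circle1) (l : PPLetter) : Circle1 ≃ₜ Circle1 :=
  if l.1 = 0 then (if l.2 then a else a⁻¹) else (if l.2 then b else b⁻¹)

/-- The ping-pong set attached to a letter. -/
def letterSet (Pa Pb Pa' Pb' : Set Circle1) (l : PPLetter) : Set Circle1 :=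
  if l.1 = 0 then (if l.2 then Pa else Pa') else (if l.2 then Pb else Pb')

/-- A word (a list of letters, multiplied left to right so that the rightmost letter is
applied first) is reduced if no letter is adjacent to its formal inverse. -/
def ReducedWord (w : List PPLetter) : Prop :=
  ∀ i, i + 1 < w.length → w.getD (i + 1) default ≠ PPLetter.formalInv (w.getD i default)

/-- A word is cyclically reduced if it is reduced and moreover its first (leftmost) letter
is not the formal inverse of its last (rightmost) letter. -/
def CyclicallyReducedWord (w : List PPLetter) : Prop :=
  ReducedWord w ∧ w.getD 0 default ≠ PPLetter.formalInv (w.getD (w.length - 1) default)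

section PP
open Filter

lemma pp_formalInv_invol (l : PPLetter) : l.formalInv.formalInv = l := by
  simp [PPLetter.formalInv]

lemma pp_reduced_iff_chain' (w : List PPLetter) :
    ReducedWord w ↔ w.Chain' (fun p q => q ≠ p.formalInv) := by
  rw [List.Chain', List.isChain_iff_getElem]
  constructor
  · intro h i hi
    have h2 : i + 1 < w.length := by omega
    have h3 : i < w.length := by omega
    have := h i h2
    rw [List.getD_eq_getElem w default h2, List.getD_eq_getElem w default h3] at this
    simpa [List.get_eq_getElem] using this
  · intro h i h2
    have h3 : i < w.length := by omega
    have := h i (by omega)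
    rw [List.getD_eq_getElem w default h2, List.getD_eq_getElem w default h3]
    simpa [List.get_eq_getElem] using this

lemma pp_letterVal_formalInv (a b : Circle1 ≃ₜ Circle1) (l : PPLetter) :
    letterVal a b l.formalInv = (letterVal a b l)⁻¹ := by
  obtain ⟨i, s⟩ := l
  fin_cases i <;> cases s <;> simp [letterVal, PPLetter.formalInv, inv_inv]

lemma pp_getD_last (w : List PPLetter) (h : w ≠ []) :
    w.getD (w.length - 1) default = w.getLast h := by
  have hlen : 0 < w.length := List.length_pos_iff.mpr h
  rw [List.getLast_eq_getElem, List.getD_eq_getElem w default (by omega)]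

variable {a b : Circle1 ≃ₜ Circle1} {Pa Pb Pa' Pb' : Set Circle1}

lemma pp_letter_facts (hpp : ContractingPingPong a b Pa Pb Pa' Pb') (l : PPLetter) :
    (letterSet Pa Pb Pa' Pb' l).Nonempty ∧ IsClosed (letterSet Pa Pb Pa' Pb' l) ∧
    (∀ x ∉ letterSet Pa Pb Pa' Pb' l.formalInv, letterVal a b l x ∈ letterSet Pa Pb Pa' Pb' l) ∧
    ContractingOn (⇑(letterVal a b l)) (letterSet Pa Pb Pa' Pb' l.formalInv)ᶜ := by
  obtain ⟨xa, hxa, -⟩ := hpp.unique_attract_a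
  obtain ⟨xb, hxb, -⟩ := hpp.unique_attract_b
  obtain ⟨xa', hxa', -⟩ := hpp.unique_attract_a'
  obtain ⟨xb', hxb', -⟩ := hpp.unique_attract_b'
  have ha := hpp.attract_mem_a _ hxa
  have hb := hpp.attract_mem_b _ hxb
  have ha' := hpp.attract_mem_a' _ hxa'
  have hb' := hpp.attract_mem_b' _ hxb'
  obtain ⟨i, s⟩ := l
  fin_cases i <;> cases s <;> simp only [letterVal, letterSet, PPLetter.formalInv] <;> norm_num
  · exact ⟨⟨xa', ha'⟩, hpp.closed_a', fun x hx => hpp.maps_a' ⟨x, hx, rfl⟩, hpp.contracting_a'⟩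
  · exact ⟨⟨xa, ha⟩, hpp.closed_a, fun x hx => hpp.maps_a ⟨x, hx, rfl⟩, hpp.contracting_a⟩
  · exact ⟨⟨xb', hb'⟩, hpp.closed_b', fun x hx => hpp.maps_b' ⟨x, hx, rfl⟩, hpp.contracting_b'⟩
  · exact ⟨⟨xb, hb⟩, hpp.closed_b, fun x hx => hpp.maps_b ⟨x, hx, rfl⟩, hpp.contracting_b⟩

lemma pp_letter_disjoint (hpp : ContractingPingPong a b Pa Pb Pa' Pb') {l l' : PPLetter}
    (h : l ≠ l') : Disjoint (letterSet Pa Pb Pa' Pb' l) (letterSet Pa Pb Pa' Pb' l') := by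
  obtain ⟨i, s⟩ := l
  obtain ⟨j, t⟩ := l'
  fin_cases i <;> fin_cases j <;> cases s <;> cases t <;>
    simp only [letterSet] <;> norm_num <;>
    first
      | exact absurd rfl h
      | exact hpp.disj_ab | exact hpp.disj_ab.symm
      | exact hpp.disj_aa' | exact hpp.disj_aa'.symm
      | exact hpp.disj_ab' | exact hpp.disj_ab'.symm
      | exact hpp.disj_ba' | exact hpp.disj_ba'.symm
      | exact hpp.disj_bb' | exact hpp.disj_bb'.symm
      | exact hpp.disj_a'b' | exact hpp.disj_a'b'.symm

lemma pp_contraction_fixed (K : Set Circle1) (hK : IsCompact K) (hne : K.Nonempty)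
    (φ : Circle1 → Circle1) (hc : Continuous φ) (hmapK : ∀ x ∈ K, φ x ∈ K)
    (hcon : ∀ x ∈ K, ∀ y ∈ K, x ≠ y → dist (φ x) (φ y) < dist x y) :
    ∃ x₀ ∈ K, φ x₀ = x₀ ∧ ∀ y ∈ K,
      Filter.Tendsto (fun k => φ^[k] y) Filter.atTop (nhds x₀) := by
  obtain ⟨x₀, hx₀K, hmin⟩ := hK.exists_isMinOn hne
    ((continuous_id.dist hc).continuousOn : ContinuousOn (fun x => dist x (φ x)) K)
  have hfix : φ x₀ = x₀ := by
    by_contra hne'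
    have h1 := hcon x₀ hx₀K (φ x₀) (hmapK _ hx₀K) (fun e => hne' e.symm)
    have h2 := (isMinOn_iff.mp hmin) (φ x₀) (hmapK _ hx₀K)
    exact absurd (lt_of_le_of_lt h2 h1) (lt_irrefl _)
  refine ⟨x₀, hx₀K, hfix, fun y hy => ?_⟩
  have hKmem : ∀ k, φ^[k] y ∈ K := by
    intro k
    induction k with
    | zero => exact hy
    | succ n ih => rw [Function.iterate_succ_apply']; exact hmapK _ ih
  set dseq : ℕ → ℝ := fun k => dist (φ^[k] y) x₀ with hdseq
  have hstep : ∀ k, dseq (k + 1) ≤ dseq k := by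
    intro k
    by_cases h : φ^[k] y = x₀
    · simp only [hdseq, Function.iterate_succ_apply', h, hfix, dist_self, le_refl]
    · have := hcon _ (hKmem k) x₀ hx₀K h
      rw [hfix] at this
      simpa only [hdseq, Function.iterate_succ_apply'] using this.le
  have hanti : Antitone dseq := antitone_nat_of_succ_le hstep
  have hbdd : BddBelow (Set.range dseq) := ⟨0, by rintro _ ⟨k, rfl⟩; exact dist_nonneg⟩
  set L := ⨅ k, dseq k with hL
  have htend : Filter.Tendsto dseq Filter.atTop (nhds L) := tendsto_atTop_ciInf hanti hbdd
  obtain ⟨z, hzK, ψ, hψ, hzt⟩ := hK.tendsto_subseq hKmem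
  have h1 : Filter.Tendsto (fun j => dseq (ψ j)) Filter.atTop (nhds (dist z x₀)) :=
    hzt.dist tendsto_const_nhds
  have h2 : Filter.Tendsto (fun j => dseq (ψ j)) Filter.atTop (nhds L) :=
    htend.comp hψ.tendsto_atTop
  have hdz : dist z x₀ = L := tendsto_nhds_unique h1 h2
  have h3 : Filter.Tendsto (fun j => dseq (ψ j + 1)) Filter.atTop (nhds L) :=
    htend.comp (Filter.tendsto_atTop_mono (fun j => Nat.le_succ _) hψ.tendsto_atTop)
  have h4 : Filter.Tendsto (fun j => dseq (ψ j + 1)) Filter.atTop (nhds (dist (φ z) x₀)) := by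
    have h5 : Filter.Tendsto (fun j => φ (φ^[ψ j] y)) Filter.atTop (nhds (φ z)) :=
      (hc.tendsto z).comp hzt
    have := h5.dist (tendsto_const_nhds (x := x₀))
    simpa only [hdseq, Function.iterate_succ_apply'] using this
  have hdφz : dist (φ z) x₀ = L := tendsto_nhds_unique h4 h3
  have hzx₀ : z = x₀ := by
    by_contra hzz
    have := hcon z hzK x₀ hx₀K hzz
    rw [hfix, hdφz, hdz] at this
    exact absurd this (lt_irrefl _)
  have hL0 : L = 0 := by rw [← hdz, hzx₀, dist_self]
  rw [tendsto_iff_dist_tendsto_zero]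
  rw [hL0] at htend
  exact htend

lemma pp_word_main {a b : Circle1 ≃ₜ Circle1} {Pa Pb Pa' Pb' : Set Circle1}
    (hpp : ContractingPingPong a b Pa Pb Pa' Pb') :
    ∀ (t : List PPLetter) (l : PPLetter),
      (l :: t).Chain' (fun p q => q ≠ p.formalInv) →
      ((∀ x ∉ letterSet Pa Pb Pa' Pb' (((l :: t).getLast (List.cons_ne_nil l t)).formalInv),
          (((l :: t).map (letterVal a b)).prod) x ∈ letterSet Pa Pb Pa' Pb' l) ∧
        ContractingOn (⇑(((l :: t).map (letterVal a b)).prod))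
          (letterSet Pa Pb Pa' Pb' (((l :: t).getLast (List.cons_ne_nil l t)).formalInv))ᶜ) := by
  intro t
  induction t with
  | nil =>
    intro l _
    have hl := pp_letter_facts hpp l
    have hprod : (([l].map (letterVal a b)).prod) = letterVal a b l := by simp
    rw [List.getLast_singleton, hprod]
    exact ⟨hl.2.2.1, hl.2.2.2⟩
  | cons l' t' ih =>
    intro l hchain
    rw [List.Chain', List.isChain_cons_cons] at hchain
    obtain ⟨hR, hchain'⟩ := hchain
    obtain ⟨ihmap, ihcon⟩ := ih l' hchain'
    have hlast : (l :: l' :: t').getLast (List.cons_ne_nil _ _) =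
        (l' :: t').getLast (List.cons_ne_nil _ _) := List.getLast_cons _
    have hprod : ((l :: l' :: t').map (letterVal a b)).prod =
        letterVal a b l * ((l' :: t').map (letterVal a b)).prod := by
      simp [List.prod_cons]
    have hsub : letterSet Pa Pb Pa' Pb' l' ⊆ (letterSet Pa Pb Pa' Pb' l.formalInv)ᶜ := by
      intro x hx
      exact fun hx' => (Set.disjoint_left.mp (pp_letter_disjoint hpp hR)) hx hx'
    have hl := pp_letter_facts hpp l
    rw [hlast, hprod]
    constructor
    · intro x hx
      have h1 := ihmap x hx
      have h2 : ((letterVal a b l) * ((l' :: t').map (letterVal a b)).prod) x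
          = letterVal a b l ((((l' :: t').map (letterVal a b)).prod) x) := rfl
      rw [h2]
      exact hl.2.2.1 _ (hsub h1)
    · intro x hx y hy hxy
      have hux := ihmap x hx
      have huy := ihmap y hy
      have hneq : (((l' :: t').map (letterVal a b)).prod) x
          ≠ (((l' :: t').map (letterVal a b)).prod) y :=
        fun e => hxy ((((l' :: t').map (letterVal a b)).prod).injective e)
      have h1 := hl.2.2.2 _ (hsub hux) _ (hsub huy) hneq
      have h2 := ihcon x hx y hy hxy
      exact lt_trans h1 h2

end PP

/-- Under the contracting ping-pong hypotheses, if `g ∈ ⟨a, b⟩` is represented by a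
cyclically reduced word of length at least 2 with rightmost letter `c` and leftmost letter
`d`, then `g` has a fixed point in `P(d)` which is an attracting fixed point of `g` in `S¹`
and is the unique attracting fixed point of `g`, and `g` has a fixed point in `P(c⁻¹)`
which is a repelling fixed point of `g` (i.e. attracting for `g⁻¹`). -/
theorem pingpong_attracting_repelling (a b : Circle1 ≃ₜ Circle1)
    (Pa Pb Pa' Pb' : Set Circle1) (hpp : ContractingPingPong a b Pa Pb Pa' Pb')
    (w : List PPLetter) (hlen : 2 ≤ w.length) (hcyc : CyclicallyReducedWord w)
    (g : Circle1 ≃ₜ Circle1) (hg : g = (w.map (letterVal a b)).prod) :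
    (∃ x ∈ letterSet Pa Pb Pa' Pb' (w.getD 0 default),
      g x = x ∧ IsAttractingFixedPt (⇑g) x ∧
        ∀ y : Circle1, IsAttractingFixedPt (⇑g) y → y = x) ∧
    (∃ x ∈ letterSet Pa Pb Pa' Pb' (PPLetter.formalInv (w.getD (w.length - 1) default)),
      g x = x ∧ IsAttractingFixedPt (⇑g⁻¹) x) := by
  haveI : Fact ((0:ℝ) < 1) := ⟨one_pos⟩
  obtain ⟨hred, hcycred⟩ := hcyc
  rw [pp_reduced_iff_chain'] at hred
  have hne : w ≠ [] := by
    intro h; rw [h] at hlen; simp at hlen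
  set S := letterSet Pa Pb Pa' Pb' with hS
  set val := letterVal a b with hval
  set d := w.head hne with hd
  set c := w.getLast hne with hc
  have hgetD0 : w.getD 0 default = d := by
    rw [hd]; cases w with
    | nil => exact absurd rfl hne
    | cons x t => rfl
  have hgetDlast : w.getD (w.length - 1) default = c := pp_getD_last w hne
  rw [hgetD0, hgetDlast] at hcycred ⊢
  have hdc : d ≠ c.formalInv := hcycred
  -- the basic word lemma in head/getLast form
  have hword : ∀ (v : List PPLetter) (hv : v ≠ []), v.Chain' (fun p q => q ≠ p.formalInv) →
      ((∀ x ∉ S ((v.getLast hv).formalInv), ((v.map val).prod) x ∈ S (v.head hv)) ∧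
        ContractingOn (⇑((v.map val).prod)) (S ((v.getLast hv).formalInv))ᶜ) := by
    intro v hv hch
    cases v with
    | nil => exact absurd rfl hv
    | cons l t => exact pp_word_main hpp t l hch
  have hmapg : ∀ x ∉ S c.formalInv, g x ∈ S d := by
    intro x hx
    have := (hword w hne hred).1 x hx
    rwa [← hg] at this
  have hcong : ContractingOn (⇑g) (S c.formalInv)ᶜ := by
    have := (hword w hne hred).2
    rwa [← hg] at this
  -- the inverse word
  have hneInv : (w.map PPLetter.formalInv).reverse ≠ [] := by
    simp only [ne_eq, List.reverse_eq_nil_iff, List.map_eq_nil_iff]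
    exact hne
  have hchainInv : ((w.map PPLetter.formalInv).reverse).Chain' (fun p q => q ≠ p.formalInv) := by
    rw [List.Chain', List.isChain_reverse, List.isChain_map]
    refine hred.imp ?_
    intro p q h e
    apply h
    rw [pp_formalInv_invol] at e
    exact e.symm
  have hheadInv : ((w.map PPLetter.formalInv).reverse).head hneInv = c.formalInv := by
    rw [hc, List.head_reverse, List.getLast_map]
  have hlastInv : ((w.map PPLetter.formalInv).reverse).getLast hneInv = d.formalInv := by
    rw [hd, List.getLast_reverse, List.head_map]
  have hprodInv : ((((w.map PPLetter.formalInv).reverse).map val).prod) = g⁻¹ := by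
    rw [hg, List.prod_inv_reverse]
    congr 1
    rw [List.map_reverse, List.map_map, List.map_map]
    exact congrArg List.reverse
      (congrArg (fun f => List.map f w) (funext fun x => pp_letterVal_formalInv a b x))
  have hmapg' : ∀ x ∉ S d, (⇑(g⁻¹)) x ∈ S c.formalInv := by
    intro x hx
    have := (hword _ hneInv hchainInv).1 x (by rwa [hlastInv, pp_formalInv_invol])
    rwa [hheadInv, hprodInv] at this
  have hcong' : ContractingOn (⇑(g⁻¹)) (S d)ᶜ := by
    have := (hword _ hneInv hchainInv).2
    rwa [hlastInv, pp_formalInv_invol, hprodInv] at this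
  -- set facts
  have hdisj : Disjoint (S d) (S c.formalInv) := pp_letter_disjoint hpp hdc
  obtain ⟨hSdne, hSdclosed, -⟩ := pp_letter_facts hpp d
  obtain ⟨hScne, hScclosed, -⟩ := pp_letter_facts hpp c.formalInv
  -- attracting fixed point of g
  obtain ⟨x₀, hx₀, hgx₀, hconv⟩ := pp_contraction_fixed (S d) hSdclosed.isCompact hSdne
    (⇑g) g.continuous
    (fun x hx => hmapg x (Set.disjoint_left.mp hdisj hx))
    (fun x hx y hy hxy => hcong x (Set.disjoint_left.mp hdisj hx)
      y (Set.disjoint_left.mp hdisj hy) hxy)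
  have hatt : IsAttractingFixedPt (⇑g) x₀ := by
    refine ⟨hgx₀, (S c.formalInv)ᶜ, hScclosed.isOpen_compl,
      Set.disjoint_left.mp hdisj hx₀, fun y hy => ?_⟩
    have h1 := hconv (g y) (hmapg y hy)
    rw [← Filter.tendsto_add_atTop_iff_nat 1]
    simpa [Function.iterate_succ_apply] using h1
  -- repelling fixed point
  obtain ⟨x₁, hx₁, hgx₁, hconv'⟩ := pp_contraction_fixed (S c.formalInv) hScclosed.isCompact
    hScne (⇑(g⁻¹)) (g⁻¹ : Circle1 ≃ₜ Circle1).continuous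
    (fun x hx => hmapg' x (Set.disjoint_right.mp hdisj hx))
    (fun x hx y hy hxy => hcong' x (Set.disjoint_right.mp hdisj hx)
      y (Set.disjoint_right.mp hdisj hy) hxy)
  have hatt' : IsAttractingFixedPt (⇑(g⁻¹)) x₁ := by
    refine ⟨hgx₁, (S d)ᶜ, hSdclosed.isOpen_compl,
      Set.disjoint_right.mp hdisj hx₁, fun y hy => ?_⟩
    have h1 := hconv' ((⇑(g⁻¹)) y) (hmapg' y hy)
    rw [← Filter.tendsto_add_atTop_iff_nat 1]
    simpa [Function.iterate_succ_apply] using h1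
  have hgfix₁ : g x₁ = x₁ := by
    have h2 : (⇑g) ((⇑(g⁻¹)) x₁) = x₁ := g.apply_symm_apply x₁
    rwa [hgx₁] at h2
  -- uniqueness of the attracting fixed point
  have huniq : ∀ y, IsAttractingFixedPt (⇑g) y → y = x₀ := by
    intro y hy
    by_cases hyc : y ∈ S c.formalInv
    · exfalso
      obtain ⟨hyfix, U, hUopen, hyU, hUconv⟩ := hy
      have hySd : y ∉ S d := Set.disjoint_right.mp hdisj hyc
      obtain ⟨ε, hε, hball⟩ := Metric.isOpen_iff.mp hSdclosed.isOpen_compl y hySd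
      have hVopen : IsOpen (U ∩ Metric.ball y ε) := hUopen.inter Metric.isOpen_ball
      have hyV : y ∈ U ∩ Metric.ball y ε := ⟨hyU, Metric.mem_ball_self hε⟩
      have hz : ∃ z ∈ U ∩ Metric.ball y ε, z ≠ y := by
        by_contra hcon0
        push_neg at hcon0
        have hVeq : U ∩ Metric.ball y ε = {y} :=
          Set.eq_singleton_iff_unique_mem.mpr ⟨hyV, hcon0⟩
        have hclop : IsClopen ({y} : Set Circle1) := ⟨isClosed_singleton, hVeq ▸ hVopen⟩
        have huniv := (isClopen_iff.mp hclop).resolve_left (Set.singleton_ne_empty y)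
        obtain ⟨p, hp⟩ := hSdne
        obtain ⟨q, hq⟩ := hScne
        have hp' : p = y := by
          have : p ∈ ({y} : Set Circle1) := huniv ▸ Set.mem_univ p
          exact this
        have hq' : q = y := by
          have : q ∈ ({y} : Set Circle1) := huniv ▸ Set.mem_univ q
          exact this
        exact (Set.disjoint_left.mp hdisj hp) (by rwa [hp', ← hq'])
      obtain ⟨z, hzV, hzy⟩ := hz
      have hconvz := hUconv z hzV.1
      have hzkney : ∀ k, (⇑g)^[k] z ≠ y := by
        intro k e
        exact hzy ((g.injective.iterate k) (e.trans (Function.iterate_fixed hyfix k).symm))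
      obtain ⟨k₀, hk₀⟩ := (Metric.tendsto_atTop.mp hconvz) ε hε
      have hstep : ∀ k, k₀ ≤ k → dist ((⇑g)^[k] z) y < dist ((⇑g)^[k+1] z) y := by
        intro k hk
        have h1 : (⇑g)^[k+1] z ∉ S d :=
          hball (Metric.mem_ball.mpr (hk₀ (k+1) (by omega)))
        have h3 := hcong' ((⇑g)^[k+1] z) h1 y hySd (hzkney (k+1))
        have h4 : (⇑(g⁻¹)) ((⇑g)^[k+1] z) = (⇑g)^[k] z := by
          rw [Function.iterate_succ_apply']
          exact g.symm_apply_apply _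
        have h5 : (⇑(g⁻¹)) y = y := by
          conv_lhs => rw [← hyfix]
          exact g.symm_apply_apply y
        rwa [h4, h5] at h3
      have hmono : ∀ m, dist ((⇑g)^[k₀] z) y ≤ dist ((⇑g)^[k₀ + m] z) y := by
        intro m
        induction m with
        | zero => rw [Nat.add_zero]
        | succ n ihn =>
          have := (hstep (k₀ + n) (by omega)).le
          rw [← Nat.add_assoc] at *
          exact le_trans ihn this
      have hpos : 0 < dist ((⇑g)^[k₀] z) y := dist_pos.mpr (hzkney k₀)
      obtain ⟨N, hN⟩ := (Metric.tendsto_atTop.mp hconvz) _ hpos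
      have h6 := hN (max N k₀) (le_max_left _ _)
      have h7 := hmono (max N k₀ - k₀)
      rw [Nat.add_sub_cancel' (le_max_right _ _)] at h7
      exact absurd (lt_of_le_of_lt h7 h6) (lt_irrefl _)
    · by_contra hne'
      have h1 := hcong y hyc x₀ (Set.disjoint_left.mp hdisj hx₀) hne'
      rw [hy.1, hgx₀] at h1
      exact absurd h1 (lt_irrefl _)
  exact ⟨⟨x₀, hx₀, hgx₀, hatt, huniq⟩, ⟨x₁, hx₁, hgfix₁, hatt'⟩⟩
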